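/- Let S be a finite subset of ℤ \ {0}. If Γ(ℤ, S) has an efficient dominating set (a dominating set D such that every integer is dominated by exactly one element of D), then γ̄(ℤ, S) = 1/(|S|+1). -/

import Mathlib

open Filter

open scoped Classical in
noncomputable def lowerDensity (U : Set ℤ) : ℝ :=
  Filter.liminf (fun n : ℕ =>
    (((Finset.Icc (-(n:ℤ)) (n:ℤ)).filter (fun m => m ∈ U)).card : ℝ) / (2*(n:ℝ)+1))
    Filter.atTop

/-- `D` is a dominating set of the Cayley digraph `Γ(ℤ, S)`. -/
def IsDominating (S D : Set ℤ) : Prop :=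
  ∀ v : ℤ, v ∈ D ∨ ∃ u ∈ D, ∃ s ∈ S, v = u + s

/-- The domination ratio of `Γ(ℤ, S)`. -/
noncomputable def domRatio (S : Set ℤ) : ℝ :=
  sInf {x : ℝ | ∃ D : Set ℤ, IsDominating S D ∧ x = lowerDensity D}

open scoped Classical

/-- membership in the domination-shadow of `u` -/
lemma mem_domSet (S : Finset ℤ) (u v : ℤ) (h : u = v ∨ ∃ s ∈ S, v = u + s) :
    v ∈ insert u (S.image (u + ·)) := by
  rcases h with rfl | ⟨s, hs, rfl⟩
  · exact Finset.mem_insert_self _ _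
  · exact Finset.mem_insert_of_mem (Finset.mem_image.2 ⟨s, hs, rfl⟩)

lemma card_domSet (S : Finset ℤ) (hS : (0:ℤ) ∉ S) (u : ℤ) :
    (insert u (S.image (u + ·))).card = S.card + 1 := by
  rw [Finset.card_insert_of_notMem, Finset.card_image_of_injective _ (add_right_injective u)]
  intro hu
  obtain ⟨s, hs, hsu⟩ := Finset.mem_image.1 hu
  have : s = 0 := by omega
  exact hS (this ▸ hs)

lemma card_domSet_le (S : Finset ℤ) (u : ℤ) :
    (insert u (S.image (u + ·))).card ≤ S.card + 1 :=
  (Finset.card_insert_le _ _).trans (Nat.add_le_add_right Finset.card_image_le 1)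

/-- Counting lower bound for an arbitrary dominating set. -/
lemma lower_count (S : Finset ℤ) (D : Set ℤ) (M : ℕ)
    (hM : ∀ s ∈ S, |s| ≤ (M:ℤ))
    (hdom : ∀ v : ℤ, ∃ u, u ∈ D ∧ (u = v ∨ ∃ s ∈ S, v = u + s))
    (n : ℕ) (hn : M ≤ n) :
    (2*((n:ℤ) - M) + 1) ≤ ((S.card : ℤ) + 1) *
      (((Finset.Icc (-(n:ℤ)) (n:ℤ)).filter (fun m => m ∈ D)).card : ℤ) := by
  choose g hgD hgdom using hdom
  have key := Finset.card_le_mul_card_image_of_maps_to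
    (f := g) (s := Finset.Icc (-((n:ℤ) - M)) ((n:ℤ) - M))
    (t := (Finset.Icc (-(n:ℤ)) (n:ℤ)).filter (fun m => m ∈ D)) ?_ (S.card + 1) ?_
  · have hc : ((Finset.Icc (-((n:ℤ) - M)) ((n:ℤ) - M)).card : ℤ) = 2*((n:ℤ)-M)+1 := by
      rw [Int.card_Icc]; omega
    have hcast : ((Finset.Icc (-((n:ℤ) - M)) ((n:ℤ) - M)).card : ℤ)
        ≤ ((S.card + 1 : ℕ) : ℤ) *
          ((((Finset.Icc (-(n:ℤ)) (n:ℤ)).filter (fun m => m ∈ D)).card : ℕ) : ℤ) := by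
      exact_mod_cast key
    rw [hc] at hcast
    push_cast at hcast ⊢
    linarith
  · intro v hv
    rw [Finset.mem_Icc] at hv
    rw [Finset.mem_filter, Finset.mem_Icc]
    refine ⟨?_, hgD v⟩
    rcases hgdom v with h | ⟨s, hs, hvs⟩
    · omega
    · have := hM s hs
      rw [abs_le] at this
      omega
  · intro b _
    calc ((Finset.Icc (-((n:ℤ) - M)) ((n:ℤ) - M)).filter (fun a => g a = b)).card
        ≤ (insert b (S.image (b + ·))).card := by
          apply Finset.card_le_card
          intro v hv
          rw [Finset.mem_filter] at hv
          apply mem_domSet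
          rcases hgdom v with h | ⟨s, hs, hvs⟩
          · exact Or.inl (hv.2 ▸ h)
          · exact Or.inr ⟨s, hs, by rw [← hv.2]; exact hvs⟩
      _ ≤ S.card + 1 := card_domSet_le S b

/-- Counting upper bound for an efficient dominating set. -/
lemma upper_count (S : Finset ℤ) (hS : (0:ℤ) ∉ S) (D : Set ℤ) (M : ℕ)
    (hM : ∀ s ∈ S, |s| ≤ (M:ℤ))
    (heff : ∀ v : ℤ, ∃! u : ℤ, u ∈ D ∧ (u = v ∨ ∃ s ∈ S, v = u + s))
    (n : ℕ) :
    ((S.card : ℤ) + 1) * (((Finset.Icc (-(n:ℤ)) (n:ℤ)).filter (fun m => m ∈ D)).card : ℤ)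
      ≤ 2*((n:ℤ) + M) + 1 := by
  set A := (Finset.Icc (-(n:ℤ)) (n:ℤ)).filter (fun m => m ∈ D) with hA
  have hAD : ∀ u ∈ A, u ∈ D := fun u hu => (Finset.mem_filter.1 hu).2
  have hdisj : ∀ u ∈ A, ∀ u' ∈ A, u ≠ u' →
      Disjoint (insert u (S.image (u + ·))) (insert u' (S.image (u' + ·))) := by
    intro u hu u' hu' hne
    rw [Finset.disjoint_left]
    intro v hv hv'
    apply hne
    have h1 : u = v ∨ ∃ s ∈ S, v = u + s := by
      rcases Finset.mem_insert.1 hv with rfl | h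
      · exact Or.inl rfl
      · obtain ⟨s, hs, rfl⟩ := Finset.mem_image.1 h
        exact Or.inr ⟨s, hs, rfl⟩
    have h2 : u' = v ∨ ∃ s ∈ S, v = u' + s := by
      rcases Finset.mem_insert.1 hv' with rfl | h
      · exact Or.inl rfl
      · obtain ⟨s, hs, rfl⟩ := Finset.mem_image.1 h
        exact Or.inr ⟨s, hs, rfl⟩
    exact (heff v).unique ⟨hAD u hu, h1⟩ ⟨hAD u' hu', h2⟩
  have hsub : A.biUnion (fun u => insert u (S.image (u + ·)))
      ⊆ Finset.Icc (-(n:ℤ) - M) ((n:ℤ) + M) := by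
    intro v hv
    obtain ⟨u, hu, hvu⟩ := Finset.mem_biUnion.1 hv
    have huI : -(n:ℤ) ≤ u ∧ u ≤ n := Finset.mem_Icc.1 (Finset.mem_filter.1 hu).1
    rw [Finset.mem_Icc]
    rcases Finset.mem_insert.1 hvu with rfl | h
    · omega
    · obtain ⟨s, hs, rfl⟩ := Finset.mem_image.1 h
      have := hM s hs
      rw [abs_le] at this
      omega
  have hcard : (A.biUnion (fun u => insert u (S.image (u + ·)))).card
      = A.card * (S.card + 1) := by
    rw [Finset.card_biUnion hdisj]
    rw [Finset.sum_congr rfl (fun u _ => card_domSet S hS u), Finset.sum_const, smul_eq_mul]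
  have h1 := Finset.card_le_card hsub
  rw [hcard] at h1
  have h2 : ((Finset.Icc (-(n:ℤ) - M) ((n:ℤ) + M)).card : ℤ) = 2*((n:ℤ)+M)+1 := by
    rw [Int.card_Icc]; omega
  have h3 : ((A.card * (S.card + 1) : ℕ) : ℤ)
      ≤ ((Finset.Icc (-(n:ℤ) - M) ((n:ℤ) + M)).card : ℤ) := by exact_mod_cast h1
  rw [h2] at h3
  push_cast at h3 ⊢
  linarith

/-- The auxiliary sequence tends to `1/(k+1)`. -/
lemma tendsto_bound (k : ℕ) (a : ℝ) :
    Tendsto (fun n : ℕ => (2*(n:ℝ) + a) / (((k:ℝ)+1) * (2*(n:ℝ)+1))) atTop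
      (nhds (1/((k:ℝ)+1))) := by
  have h2 : Tendsto (fun n : ℕ => 2*(n:ℝ)+1) atTop atTop := by
    apply Filter.tendsto_atTop_add_const_right
    exact (tendsto_natCast_atTop_atTop).const_mul_atTop two_pos
  have t0 : Tendsto (fun n : ℕ => (2*(n:ℝ)+1)⁻¹) atTop (nhds 0) :=
    tendsto_inv_atTop_zero.comp h2
  have heq : (fun n : ℕ => (2*(n:ℝ) + a) / (((k:ℝ)+1) * (2*(n:ℝ)+1)))
      = fun n : ℕ => 1/((k:ℝ)+1) + ((a-1)/((k:ℝ)+1)) * (2*(n:ℝ)+1)⁻¹ := by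
    funext n
    have hn : (2*(n:ℝ)+1) ≠ 0 := by positivity
    have hk : ((k:ℝ)+1) ≠ 0 := by positivity
    field_simp
    ring
  rw [heq]
  have hcm := t0.const_mul ((a-1)/((k:ℝ)+1))
  have h3 : Tendsto (fun n : ℕ => 1/((k:ℝ)+1) + ((a-1)/((k:ℝ)+1)) * (2*(n:ℝ)+1)⁻¹) atTop
      (nhds (1/((k:ℝ)+1) + ((a-1)/((k:ℝ)+1)) * 0)) := Filter.Tendsto.const_add _ hcm
  simpa using h3

lemma f_nonneg (D : Set ℤ) (n : ℕ) :
    0 ≤ (((Finset.Icc (-(n:ℤ)) (n:ℤ)).filter (fun m => m ∈ D)).card : ℝ) / (2*(n:ℝ)+1) := by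
  positivity

lemma f_le_one (D : Set ℤ) (n : ℕ) :
    (((Finset.Icc (-(n:ℤ)) (n:ℤ)).filter (fun m => m ∈ D)).card : ℝ) / (2*(n:ℝ)+1) ≤ 1 := by
  rw [div_le_one (by positivity)]
  have hcard : ((Finset.Icc (-(n:ℤ)) (n:ℤ)).filter (fun m => m ∈ D)).card
      ≤ (Finset.Icc (-(n:ℤ)) (n:ℤ)).card := Finset.card_le_card (Finset.filter_subset _ _)
  have h2 : (((Finset.Icc (-(n:ℤ)) (n:ℤ)).card : ℕ) : ℤ) = 2*(n:ℤ)+1 := by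
    rw [Int.card_Icc]; omega
  have h3 : ((((Finset.Icc (-(n:ℤ)) (n:ℤ)).filter (fun m => m ∈ D)).card : ℕ) : ℤ)
      ≤ 2*(n:ℤ)+1 := by rw [← h2]; exact_mod_cast hcard
  have h4 : ((((Finset.Icc (-(n:ℤ)) (n:ℤ)).filter (fun m => m ∈ D)).card : ℕ) : ℝ)
      ≤ ((2*(n:ℤ)+1 : ℤ) : ℝ) := by exact_mod_cast h3
  push_cast at h4
  linarith

/-- lower bound for the density sequence of any dominating set. -/
lemma seq_lower (S : Finset ℤ) (D : Set ℤ) (M : ℕ)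
    (hM : ∀ s ∈ S, |s| ≤ (M:ℤ))
    (hdom : ∀ v : ℤ, ∃ u, u ∈ D ∧ (u = v ∨ ∃ s ∈ S, v = u + s))
    (n : ℕ) (hn : M ≤ n) :
    (2*(n:ℝ) + (1 - 2*M)) / (((S.card:ℝ)+1) * (2*(n:ℝ)+1))
      ≤ (((Finset.Icc (-(n:ℤ)) (n:ℤ)).filter (fun m => m ∈ D)).card : ℝ) / (2*(n:ℝ)+1) := by
  have h := lower_count S D M hM hdom n hn
  have hR : (2*(n:ℝ) + (1 - 2*M)) ≤ ((S.card:ℝ)+1) *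
      (((Finset.Icc (-(n:ℤ)) (n:ℤ)).filter (fun m => m ∈ D)).card : ℝ) := by
    have h' : ((2*((n:ℤ) - M) + 1 : ℤ) : ℝ) ≤ ((((S.card : ℤ) + 1) *
        (((Finset.Icc (-(n:ℤ)) (n:ℤ)).filter (fun m => m ∈ D)).card : ℤ) : ℤ) : ℝ) := by
      exact_mod_cast h
    push_cast at h'
    linarith
  rw [div_le_div_iff₀ (by positivity) (by positivity)]
  nlinarith [mul_le_mul_of_nonneg_right hR (by positivity : (0:ℝ) ≤ 2*(n:ℝ)+1)]

/-- upper bound for the density sequence of an efficient dominating set. -/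
lemma seq_upper (S : Finset ℤ) (hS : (0:ℤ) ∉ S) (D : Set ℤ) (M : ℕ)
    (hM : ∀ s ∈ S, |s| ≤ (M:ℤ))
    (heff : ∀ v : ℤ, ∃! u : ℤ, u ∈ D ∧ (u = v ∨ ∃ s ∈ S, v = u + s))
    (n : ℕ) :
    (((Finset.Icc (-(n:ℤ)) (n:ℤ)).filter (fun m => m ∈ D)).card : ℝ) / (2*(n:ℝ)+1)
      ≤ (2*(n:ℝ) + (1 + 2*M)) / (((S.card:ℝ)+1) * (2*(n:ℝ)+1)) := by
  have h := upper_count S hS D M hM heff n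
  have hR : ((S.card:ℝ)+1) *
      (((Finset.Icc (-(n:ℤ)) (n:ℤ)).filter (fun m => m ∈ D)).card : ℝ)
        ≤ 2*(n:ℝ) + (1 + 2*M) := by
    have h' : ((((S.card : ℤ) + 1) *
        (((Finset.Icc (-(n:ℤ)) (n:ℤ)).filter (fun m => m ∈ D)).card : ℤ) : ℤ) : ℝ)
        ≤ ((2*((n:ℤ) + M) + 1 : ℤ) : ℝ) := by
      exact_mod_cast h
    push_cast at h'
    linarith
  rw [div_le_div_iff₀ (by positivity) (by positivity)]
  nlinarith [mul_le_mul_of_nonneg_right hR (by positivity : (0:ℝ) ≤ 2*(n:ℝ)+1)]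

lemma hM_sup (S : Finset ℤ) : ∀ s ∈ S, |s| ≤ ((S.sup Int.natAbs : ℕ) : ℤ) := by
  intro s hs
  have := Finset.le_sup (f := Int.natAbs) hs
  rcases abs_cases s with ⟨h1, h2⟩ | ⟨h1, h2⟩ <;> omega

/-- Any dominating set has lower density at least `1/(|S|+1)`. -/
lemma lowerDensity_ge (S : Finset ℤ) (D : Set ℤ) (hdom : IsDominating ↑S D) :
    1/((S.card:ℝ)+1) ≤ lowerDensity D := by
  set M : ℕ := S.sup Int.natAbs with hMdef
  have hM := hM_sup S
  have hdom' : ∀ v : ℤ, ∃ u, u ∈ D ∧ (u = v ∨ ∃ s ∈ S, v = u + s) := by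
    intro v
    rcases hdom v with h | ⟨u, hu, s, hs, rfl⟩
    · exact ⟨v, h, Or.inl rfl⟩
    · exact ⟨u, hu, Or.inr ⟨s, hs, rfl⟩⟩
  have hL : Tendsto (fun n : ℕ => (2*(n:ℝ) + (1 - 2*M)) / (((S.card:ℝ)+1) * (2*(n:ℝ)+1)))
      atTop (nhds (1/((S.card:ℝ)+1))) := tendsto_bound S.card (1 - 2*M)
  have hle : liminf (fun n : ℕ => (2*(n:ℝ) + (1 - 2*M)) / (((S.card:ℝ)+1) * (2*(n:ℝ)+1))) atTop
      ≤ lowerDensity D := by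
    apply Filter.liminf_le_liminf
    · filter_upwards [eventually_ge_atTop M] with n hn
      exact seq_lower S D M hM hdom' n hn
    · exact hL.isBoundedUnder_ge
    · exact Filter.isCoboundedUnder_ge_of_le atTop (f_le_one D)
  rwa [hL.liminf_eq] at hle

/-- An efficient dominating set has lower density exactly `1/(|S|+1)`. -/
lemma lowerDensity_eff (S : Finset ℤ) (hS : (0:ℤ) ∉ S) (D : Set ℤ)
    (heff : ∀ v : ℤ, ∃! u : ℤ, u ∈ D ∧ (u = v ∨ ∃ s ∈ S, v = u + s)) :
    lowerDensity D = 1/((S.card:ℝ)+1) := by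
  set M : ℕ := S.sup Int.natAbs with hMdef
  have hM := hM_sup S
  have hdom' : ∀ v : ℤ, ∃ u, u ∈ D ∧ (u = v ∨ ∃ s ∈ S, v = u + s) := fun v =>
    (heff v).exists
  have ht : Tendsto (fun n : ℕ =>
      (((Finset.Icc (-(n:ℤ)) (n:ℤ)).filter (fun m => m ∈ D)).card : ℝ) / (2*(n:ℝ)+1))
      atTop (nhds (1/((S.card:ℝ)+1))) := by
    apply tendsto_of_tendsto_of_tendsto_of_le_of_le'
      (tendsto_bound S.card (1 - 2*M)) (tendsto_bound S.card (1 + 2*M))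
    · filter_upwards [eventually_ge_atTop M] with n hn
      exact seq_lower S D M hM hdom' n hn
    · filter_upwards with n
      exact seq_upper S hS D M hM heff n
  exact ht.liminf_eq

theorem stmt_8 (S : Finset ℤ) (hS : (0:ℤ) ∉ S) (D : Set ℤ)
    (heff : ∀ v : ℤ, ∃! u : ℤ, u ∈ D ∧ (u = v ∨ ∃ s ∈ S, v = u + s)) :
    domRatio ↑S = 1 / ((S.card : ℝ) + 1) := by
  have hdomD : IsDominating ↑S D := by
    intro v
    obtain ⟨u, ⟨huD, h⟩, -⟩ := heff v
    rcases h with rfl | ⟨s, hs, rfl⟩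
    · exact Or.inl huD
    · exact Or.inr ⟨u, huD, s, hs, rfl⟩
  have hmem : 1/((S.card:ℝ)+1) ∈
      {x : ℝ | ∃ D' : Set ℤ, IsDominating ↑S D' ∧ x = lowerDensity D'} :=
    ⟨D, hdomD, (lowerDensity_eff S hS D heff).symm⟩
  have hlb : ∀ x ∈ {x : ℝ | ∃ D' : Set ℤ, IsDominating ↑S D' ∧ x = lowerDensity D'},
      1/((S.card:ℝ)+1) ≤ x := by
    rintro x ⟨D', hD', rfl⟩
    exact lowerDensity_ge S D' hD'
  exact le_antisymm (csInf_le ⟨_, hlb⟩ hmem) (le_csInf ⟨_, hmem⟩ hlb)
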